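/- With a = i, b = 2, the determinant of the 2k×2k matrix F_{2k} equals P(k+1)², the square of the (k+1)-st Pell number, for all k ≥ 1. -/

import Mathlib

/-- The Pell sequence: `P 0 = 0`, `P 1 = 1`, `P (n+2) = 2 * P (n+1) + P n`. -/
def pell : ℕ → ℕ
  | 0 => 0
  | 1 => 1
  | (n + 2) => 2 * pell (n + 1) + pell n

open Matrix Complex

def triM (d : ℂ) (n : ℕ) : Matrix (Fin n) (Fin n) ℂ :=
  Matrix.of fun p q =>
    if (q : ℕ) = p + 1 then Complex.I else if (p : ℕ) = q + 1 then -Complex.I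
    else if (p : ℕ) = q then d else 0

def cont (d : ℂ) : ℕ → ℂ
  | 0 => 1
  | 1 => d
  | (n + 2) => d * cont d (n + 1) - cont d n

lemma triM_shift (d : ℂ) (n : ℕ) :
    (triM d (n + 2)).submatrix Fin.succ Fin.succ = triM d (n + 1) := by
  ext p q
  simp only [triM, Matrix.submatrix_apply, Matrix.of_apply, Fin.val_succ]
  exact if_congr (by omega) rfl (if_congr (by omega) rfl (if_congr (by omega) rfl rfl))

lemma triM_det (d : ℂ) : ∀ n, (triM d n).det = cont d n := by
  intro n
  induction n using Nat.twoStepInduction with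
  | zero => simp [cont, Matrix.det_fin_zero]
  | one => simp [cont, Matrix.det_fin_one, triM]
  | more n ihn ihn1 =>
    rw [Matrix.det_succ_row_zero, Fin.sum_univ_succ, Fin.sum_univ_succ]
    have hz : ∀ j : Fin n, triM d (n + 2) 0 j.succ.succ = 0 := by
      intro j
      simp only [triM, Matrix.of_apply, Fin.val_succ, Fin.val_zero]
      simp
    have h00 : triM d (n + 2) 0 0 = d := by
      simp [triM]
    have h01 : triM d (n + 2) 0 1 = Complex.I := by
      have h1 : ((1 : Fin (n + 2)) : ℕ) = 1 := rfl
      simp [triM, h1]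
    have hm0 : ((triM d (n+2)).submatrix Fin.succ (Fin.succAbove 0)).det = cont d (n+1) := by
      rw [Fin.succAbove_zero, triM_shift, ihn1]
    have hm1 : ((triM d (n+2)).submatrix Fin.succ (Fin.succAbove 1)).det
        = -Complex.I * cont d n := by
      rw [Matrix.det_succ_column_zero, Fin.sum_univ_succ]
      have hz1 : ∀ i : Fin n,
          (triM d (n+2)).submatrix Fin.succ (Fin.succAbove 1) i.succ 0 = 0 := by
        intro i
        simp only [Matrix.submatrix_apply, Fin.one_succAbove_zero, triM, Matrix.of_apply,
          Fin.val_succ, Fin.val_zero]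
        simp
      have he0 : (triM d (n+2)).submatrix Fin.succ (Fin.succAbove 1) 0 0 = -Complex.I := by
        simp only [Matrix.submatrix_apply, Fin.one_succAbove_zero, triM, Matrix.of_apply]
        norm_num
      have hsub : ((triM d (n+2)).submatrix Fin.succ (Fin.succAbove 1)).submatrix
          (Fin.succAbove 0) Fin.succ = triM d n := by
        ext p q
        simp only [Matrix.submatrix_apply, Fin.succAbove_zero, Fin.one_succAbove_succ, triM,
          Matrix.of_apply, Fin.val_succ]
        exact if_congr (by omega) rfl (if_congr (by omega) rfl (if_congr (by omega) rfl rfl))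
      rw [he0, hsub, ihn]
      rw [Finset.sum_congr rfl (fun i _ => by rw [hz1 i, mul_zero, zero_mul])]
      simp
    have hsz : (Fin.succ (0 : Fin (n+1))) = (1 : Fin (n+2)) := rfl
    rw [hsz, hm0, hm1, h00, h01]
    rw [Finset.sum_congr rfl (fun i _ => by rw [hz i, mul_zero, zero_mul])]
    simp [cont]
    ring_nf
    rw [Complex.I_sq]
    ring

lemma cont_pos : ∀ n, cont (2 * Complex.I) n = Complex.I ^ n * (pell (n + 1) : ℂ) := by
  intro n
  induction n using Nat.twoStepInduction with
  | zero => simp [cont, pell]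
  | one => simp [cont, pell]; ring
  | more n ihn ihn1 =>
    rw [show n + 2 + 1 = n + 3 from rfl]
    rw [cont, ihn, ihn1, show pell (n + 3) = 2 * pell (n + 2) + pell (n + 1) from rfl]
    push_cast
    ring_nf
    rw [Complex.I_sq]
    ring

lemma cont_neg : ∀ n, cont (-(2 * Complex.I)) n = (-Complex.I) ^ n * (pell (n + 1) : ℂ) := by
  intro n
  induction n using Nat.twoStepInduction with
  | zero => simp [cont, pell]
  | one => simp [cont, pell]; ring
  | more n ihn ihn1 =>
    rw [show n + 2 + 1 = n + 3 from rfl]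
    rw [cont, ihn, ihn1, show pell (n + 3) = 2 * pell (n + 2) + pell (n + 1) from rfl]
    push_cast
    ring_nf
    rw [Complex.I_sq]
    ring


/-- With `a = i`, `b = 2`: for all `k ≥ 1`, the determinant of the `2k × 2k` matrix
`F_{2k} = [[A_k, B_k], [(-1)^k B_k, A_k]]` equals `P(k+1)²`, the square of the
`(k+1)`-st Pell number. -/
theorem stmt15 (k : ℕ) (hk : 1 ≤ k)
    (A B : Matrix (Fin k) (Fin k) ℂ)
    (hA : ∀ p q : Fin k, A p q =
      if q.1 = p.1 + 1 then Complex.I else if p.1 = q.1 + 1 then -Complex.I else 0)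
    (hB : ∀ p q : Fin k, B p q =
      if p.1 + q.1 + 1 = k then (-1 : ℂ) ^ p.1 * 2 else 0) :
    (Matrix.fromBlocks A B (((-1 : ℂ) ^ k) • B) A).det = (pell (k + 1) : ℂ) ^ 2 := by
  -- the "reversal" index
  have hrv : ∀ r : Fin k, k - 1 - (r : ℕ) < k := fun r => by omega
  set rv : Fin k → Fin k := fun r => ⟨k - 1 - r.1, hrv r⟩ with hrvdef
  have hB' : ∀ p q : Fin k, B p q = if p = rv q then (-1 : ℂ) ^ p.1 * 2 else 0 := by
    intro p q
    rw [hB p q]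
    refine if_congr ?_ rfl rfl
    have hp := p.2; have hq := q.2
    rw [Fin.ext_iff]
    constructor <;> intro h <;> simp only [hrvdef] at * <;> omega
  have hmulB : ∀ (M : Matrix (Fin k) (Fin k) ℂ) (p r : Fin k),
      (M * B) p r = M p (rv r) * ((-1 : ℂ) ^ (rv r).1 * 2) := by
    intro M p r
    rw [Matrix.mul_apply]
    rw [Finset.sum_congr rfl (fun q _ => by rw [hB' q r, mul_ite, mul_zero])]
    rw [Finset.sum_ite_eq' Finset.univ (rv r) (fun q => M p q * ((-1:ℂ)^q.1 * 2))]
    simp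
  have hB'' : ∀ p q : Fin k, B p q = if q = rv p then (-1 : ℂ) ^ p.1 * 2 else 0 := by
    intro p q
    rw [hB p q]
    refine if_congr ?_ rfl rfl
    have hp := p.2; have hq := q.2
    rw [Fin.ext_iff]
    constructor <;> intro h <;> simp only [hrvdef] at * <;> omega
  have hBmul : ∀ (M : Matrix (Fin k) (Fin k) ℂ) (p r : Fin k),
      (B * M) p r = ((-1 : ℂ) ^ p.1 * 2) * M (rv p) r := by
    intro M p r
    rw [Matrix.mul_apply]
    rw [Finset.sum_congr rfl (fun q _ => by rw [hB'' p q, ite_mul, zero_mul])]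
    rw [Finset.sum_ite_eq' Finset.univ (rv p) (fun q => ((-1:ℂ)^p.1 * 2) * M q r)]
    simp
  have hrv2 : ∀ r : Fin k, (rv r).1 = k - 1 - r.1 := fun r => rfl
  have hcomm : A * B = B * A := by
    ext p r
    rw [hmulB A p r, hBmul A p r, hA, hA]
    have hp := p.2; have hr := r.2
    simp only [hrv2]
    split_ifs with h1 h2 h3 h4 h5 h6 h7 h8 <;>
      first
        | (exfalso; omega)
        | (first
            | (rw [show k - 1 - r.1 = p.1 + 1 by omega, pow_succ]; ring)
            | (rw [show p.1 = (k - 1 - r.1) + 1 by omega, pow_succ]; ring)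
            | ring)
  have hBB : B * B = ((4 : ℂ) * (-1) ^ (k - 1)) • (1 : Matrix (Fin k) (Fin k) ℂ) := by
    ext p r
    rw [hBmul B p r, hB'' (rv p) r]
    have hp := p.2; have hr := r.2
    have hiff : (r = rv (rv p)) ↔ p = r := by
      rw [Fin.ext_iff, Fin.ext_iff]
      simp only [hrv2]
      omega
    simp only [Matrix.smul_apply, Matrix.one_apply, smul_eq_mul, hiff, hrv2]
    by_cases h : p = r
    · rw [if_pos h, if_pos h, mul_one]
      rw [show ((-1:ℂ)^p.1 * 2) * ((-1:ℂ)^(k-1-p.1) * 2) = ((-1:ℂ)^p.1 * (-1:ℂ)^(k-1-p.1)) * 4 by ring]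
      rw [← pow_add, show p.1 + (k - 1 - p.1) = k - 1 by omega]
      ring
    · rw [if_neg h, if_neg h, mul_zero, mul_zero]
  set ω : ℂ := Complex.I ^ k with hωdef
  have hω : ω * ω = (-1 : ℂ) ^ k := by
    rw [hωdef, ← mul_pow, Complex.I_mul_I]
  -- block triangularization
  set W : Matrix (Fin k) (Fin k) ℂ := ω • 1 with hWdef
  have hW : ∀ M : Matrix (Fin k) (Fin k) ℂ, W * M = ω • M := fun M => by
    rw [hWdef, Matrix.smul_mul, Matrix.one_mul]
  have hW' : ∀ M : Matrix (Fin k) (Fin k) ℂ, M * W = ω • M := fun M => by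
    rw [hWdef, Matrix.mul_smul, Matrix.mul_one]
  have hLU : Matrix.fromBlocks (1 : Matrix (Fin k) (Fin k) ℂ) 0 (-W) 1 *
      (Matrix.fromBlocks A B (((-1 : ℂ) ^ k) • B) A * Matrix.fromBlocks 1 0 W 1)
      = Matrix.fromBlocks (A + ω • B) B 0 (A - ω • B) := by
    rw [Matrix.fromBlocks_multiply, Matrix.fromBlocks_multiply]
    rw [Matrix.fromBlocks_inj]
    refine ⟨?_, ?_, ?_, ?_⟩
    · rw [Matrix.one_mul, Matrix.zero_mul, add_zero, Matrix.mul_one, hW' B]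
    · rw [Matrix.mul_zero, zero_add, Matrix.mul_one, Matrix.one_mul, Matrix.zero_mul, add_zero]
    · rw [Matrix.mul_one, Matrix.mul_one, Matrix.one_mul, hW' B, hW' A, Matrix.neg_mul,
        hW (A + ω • B), smul_add, smul_smul, hω]
      abel
    · rw [Matrix.mul_zero, zero_add, Matrix.mul_one, Matrix.mul_zero, zero_add, Matrix.mul_one,
        Matrix.one_mul, Matrix.neg_mul, hW B, sub_eq_add_neg]
      abel
  have hdet1 : (Matrix.fromBlocks A B (((-1 : ℂ) ^ k) • B) A).det
      = (A + ω • B).det * (A - ω • B).det := by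
    have h := congrArg Matrix.det hLU
    rw [Matrix.det_mul, Matrix.det_mul, Matrix.det_fromBlocks_zero₁₂,
      Matrix.det_fromBlocks_zero₁₂, Matrix.det_fromBlocks_zero₂₁] at h
    simp only [Matrix.det_one] at h
    linear_combination h
  have hexp : (A + ω • B) * (A - ω • B)
      = (A + (2 * Complex.I) • 1) * (A - (2 * Complex.I) • 1) := by
    have e1 : (-1:ℂ)^k * (-1)^(k-1) = -1 := by
      rw [← pow_add, show k + (k - 1) = 2*(k-1)+1 by omega, pow_succ, pow_mul]
      norm_num
    have h1 : (-1:ℂ)^k * (4 * (-1)^(k-1)) = 2*Complex.I*(2*Complex.I) := by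
      have e2 : 2*Complex.I*(2*Complex.I) = -4 := by
        ring_nf
        rw [Complex.I_sq]
        ring
      rw [e2, show (-1:ℂ)^k * (4 * (-1)^(k-1)) = ((-1:ℂ)^k * (-1)^(k-1)) * 4 by ring, e1]
      ring
    simp only [mul_sub, add_mul]
    simp only [Matrix.mul_smul, Matrix.smul_mul, smul_smul, Matrix.one_mul, Matrix.mul_one]
    rw [hcomm, hBB, smul_smul, hω, h1]
    abel
  have hT1 : A + (2*Complex.I) • (1 : Matrix (Fin k) (Fin k) ℂ) = triM (2*Complex.I) k := by
    ext p q
    simp only [Matrix.add_apply, Matrix.smul_apply, Matrix.one_apply, smul_eq_mul, hA, triM,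
      Matrix.of_apply, mul_ite, mul_one, mul_zero, Fin.ext_iff]
    split_ifs <;> first | ring1 | (exfalso; omega)
  have hT2 : A - (2*Complex.I) • (1 : Matrix (Fin k) (Fin k) ℂ) = triM (-(2*Complex.I)) k := by
    ext p q
    simp only [Matrix.sub_apply, Matrix.smul_apply, Matrix.one_apply, smul_eq_mul, hA, triM,
      Matrix.of_apply, mul_ite, mul_one, mul_zero, Fin.ext_iff]
    split_ifs <;> first | ring1 | (exfalso; omega)
  rw [hdet1, ← Matrix.det_mul, hexp, Matrix.det_mul, hT1, hT2, triM_det, triM_det,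
    cont_pos, cont_neg]
  have hone : (Complex.I)^k * (-Complex.I)^k = 1 := by
    rw [← mul_pow, mul_neg, Complex.I_mul_I, neg_neg, one_pow]
  rw [show Complex.I^k * ((pell (k+1):ℕ) : ℂ) * ((-Complex.I)^k * ((pell (k+1):ℕ) : ℂ))
      = (Complex.I^k * (-Complex.I)^k) * ((pell (k+1):ℕ) : ℂ)^2 by ring, hone, one_mul]
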